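/- Let g = H⁻¹ : [0,1] → [0,1/2] be the inverse of the binary entropy function. For any a ∈ (0,1], the function p(x) = g(a·x + 1 − a) − g(x) is concave on [0,1]. -/

import Mathlib

/-- The binary entropy function (base-2 logarithms). -/
noncomputable def binH (p : ℝ) : ℝ := -(p * Real.logb 2 p + (1 - p) * Real.logb 2 (1 - p))

open Real Set

noncomputable def mglL (t : ℝ) : ℝ := Real.log (1 - t) - Real.log t
noncomputable def mglK (t : ℝ) : ℝ := Real.log 2 + t * Real.log t + (1 - t) * Real.log (1 - t)

lemma mglK_eq (t : ℝ) : mglK t = Real.log 2 - Real.binEntropy t := by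
  rw [Real.binEntropy, Real.log_inv, Real.log_inv, mglK]; ring

lemma mglK_nonneg (t : ℝ) : 0 ≤ mglK t := by
  rw [mglK_eq]; linarith [Real.binEntropy_le_log_two (p := t)]

lemma mglK_pos {t : ℝ} (ht : t ≠ 2⁻¹) : 0 < mglK t := by
  rw [mglK_eq]; linarith [Real.binEntropy_lt_log_two.2 ht]

lemma mglK_le_two {t : ℝ} (h0 : 0 ≤ t) (h1 : t ≤ 1) : mglK t ≤ 2 := by
  rw [mglK_eq]
  have := Real.binEntropy_nonneg h0 h1
  have := Real.log_two_lt_d9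
  linarith

lemma mglL_pos {t : ℝ} (h0 : 0 < t) (h1 : t < 1/2) : 0 < mglL t := by
  have : Real.log t < Real.log (1 - t) := Real.log_lt_log h0 (by linarith)
  simpa [mglL, sub_pos] using this

lemma hasDerivAt_mglL {t : ℝ} (h0 : t ≠ 0) (h1 : t ≠ 1) :
    HasDerivAt mglL (-(1/(1-t)) - 1/t) t := by
  have h1' : 1 - t ≠ 0 := sub_ne_zero.2 (Ne.symm h1)
  have ha : HasDerivAt (fun x : ℝ => 1 - x) (-1) t := by
    simpa using (hasDerivAt_id t).const_sub 1
  have hlog1 : HasDerivAt (fun x : ℝ => Real.log (1 - x)) ((1-t)⁻¹ * (-1)) t :=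
    (Real.hasDerivAt_log h1').comp t ha
  have hlog2 : HasDerivAt Real.log t⁻¹ t := Real.hasDerivAt_log h0
  have := hlog1.sub hlog2
  refine this.congr_deriv ?_
  field_simp

lemma hasDerivAt_mglK {t : ℝ} (h0 : t ≠ 0) (h1 : t ≠ 1) :
    HasDerivAt mglK (-(mglL t)) t := by
  have h1' : (1:ℝ) - t ≠ 0 := sub_ne_zero.2 (Ne.symm h1)
  have ha : HasDerivAt (fun x : ℝ => 1 - x) (-1) t := by
    simpa using (hasDerivAt_id t).const_sub 1
  have hm : HasDerivAt (fun x : ℝ => x * Real.log x) (Real.log t + 1) t :=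
    Real.hasDerivAt_mul_log h0
  have hm2 : HasDerivAt (fun x : ℝ => (1 - x) * Real.log (1 - x))
      ((Real.log (1-t) + 1) * (-1)) t :=
    (Real.hasDerivAt_mul_log h1').comp t ha
  have := ((hasDerivAt_const t (Real.log 2)).add hm).add hm2
  refine this.congr_deriv ?_
  simp only [mglL]; ring

noncomputable def mglE (t : ℝ) : ℝ :=
  2*t*(1-t)*(mglL t)*(1 + 2*(mglK t)) + 2*(1-2*t)*(mglK t) - 2*t*(1-t)*(1-2*t)*(mglL t)^2

noncomputable def mglF (t : ℝ) : ℝ :=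
  2*t*(1-t)*(mglL t)^2 + (1-2*t)*(mglL t)*(mglK t) - 3*(mglK t)

lemma hasDerivAt_mglE {t : ℝ} (h0 : 0 < t) (h1 : t < 1) :
    HasDerivAt mglE
      (-2*(((1-2*t)*(mglL t) - 1 - mglK t)^2 + (mglK t)*(2 - mglK t))) t := by
  have h0' : t ≠ 0 := ne_of_gt h0
  have h1' : t ≠ 1 := ne_of_lt h1
  have ht : (1:ℝ) - t ≠ 0 := sub_ne_zero.2 (Ne.symm h1')
  have hL := hasDerivAt_mglL h0' h1'
  have hK := hasDerivAt_mglK h0' h1'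
  have hid : HasDerivAt (fun x : ℝ => x) 1 t := hasDerivAt_id t
  have h1t : HasDerivAt (fun x : ℝ => 1 - x) (-1) t := hid.const_sub 1
  have h2t : HasDerivAt (fun x : ℝ => 1 - 2*x) (-(2:ℝ)) t := by
    simpa using (hid.const_mul 2).const_sub 1
  have hA := (((hid.const_mul 2).mul h1t).mul hL).mul ((hK.const_mul 2).const_add 1)
  have hB := (h2t.const_mul 2).mul hK
  have hC := (((hid.const_mul 2).mul h1t).mul h2t).mul (hL.pow 2)
  have h := (hA.add hB).sub hC
  have hfun : mglE = fun x => 2*x*(1-x)*(mglL x)*(1 + 2*(mglK x)) + 2*(1-2*x)*(mglK x)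
      - 2*x*(1-x)*(1-2*x)*(mglL x)^2 := rfl
  rw [hfun]
  refine h.congr_deriv ?_
  simp only [Pi.mul_apply, Pi.pow_apply]
  have hK2 : mglK t = mglK t := rfl
  field_simp
  ring


lemma mglE_half : mglE (1/2) = 0 := by
  have hL : mglL (1/2) = 0 := by norm_num [mglL]
  have hK : mglK (1/2) = 0 := by
    have : Real.log (1/2 : ℝ) = -Real.log 2 := by
      rw [one_div, Real.log_inv]
    norm_num [mglK, this]; ring
  norm_num [mglE, hL, hK]

lemma hasDerivAt_mglF {t : ℝ} (h0 : 0 < t) (h1 : t < 1) :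
    HasDerivAt mglF (-(mglE t) / (2*t*(1-t))) t := by
  have h0' : t ≠ 0 := ne_of_gt h0
  have h1' : t ≠ 1 := ne_of_lt h1
  have ht : (1:ℝ) - t ≠ 0 := sub_ne_zero.2 (Ne.symm h1')
  have hL := hasDerivAt_mglL h0' h1'
  have hK := hasDerivAt_mglK h0' h1'
  have hid : HasDerivAt (fun x : ℝ => x) 1 t := hasDerivAt_id t
  have h1t : HasDerivAt (fun x : ℝ => 1 - x) (-1) t := hid.const_sub 1
  have h2t : HasDerivAt (fun x : ℝ => 1 - 2*x) (-(2:ℝ)) t := by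
    simpa using (hid.const_mul 2).const_sub 1
  have hA := ((hid.const_mul 2).mul h1t).mul (hL.pow 2)
  have hB := (h2t.mul hL).mul hK
  have hC := hK.const_mul 3
  have h := (hA.add hB).sub hC
  have hfun : mglF = fun x => 2*x*(1-x)*(mglL x)^2 + (1-2*x)*(mglL x)*(mglK x)
      - 3*(mglK x) := rfl
  rw [hfun]
  refine h.congr_deriv ?_
  simp only [Pi.mul_apply, Pi.pow_apply]
  rw [mglE]
  field_simp
  ring

lemma mglF_half : mglF (1/2) = 0 := by
  have hL : mglL (1/2) = 0 := by norm_num [mglL]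
  have hK : mglK (1/2) = 0 := by
    have : Real.log (1/2 : ℝ) = -Real.log 2 := by rw [one_div, Real.log_inv]
    norm_num [mglK, this]; ring
  norm_num [mglF, hL, hK]

lemma mglE_nonneg {t : ℝ} (h0 : 0 < t) (h1 : t ≤ 1/2) : 0 ≤ mglE t := by
  have hanti : AntitoneOn mglE (Ioc 0 (1/2 : ℝ)) := by
    apply antitoneOn_of_hasDerivWithinAt_nonpos (convex_Ioc _ _)
      (f' := fun t => -2*(((1-2*t)*(mglL t) - 1 - mglK t)^2 + (mglK t)*(2 - mglK t)))
    · intro x hx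
      exact ((hasDerivAt_mglE hx.1 (by linarith [hx.2])).continuousAt).continuousWithinAt
    · intro x hx
      rw [interior_Ioc] at hx
      exact (hasDerivAt_mglE hx.1 (by linarith [hx.2])).hasDerivWithinAt
    · intro x hx
      rw [interior_Ioc] at hx
      have hK0 : 0 ≤ mglK x := mglK_nonneg x
      have hK2 : mglK x ≤ 2 := mglK_le_two (le_of_lt hx.1) (by linarith [hx.2])
      nlinarith [sq_nonneg ((1-2*x)*(mglL x) - 1 - mglK x)]
  have := hanti ⟨h0, h1⟩ ⟨by norm_num, le_refl _⟩ h1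
  rw [mglE_half] at this
  exact this

lemma mglF_nonneg {t : ℝ} (h0 : 0 < t) (h1 : t ≤ 1/2) : 0 ≤ mglF t := by
  have hanti : AntitoneOn mglF (Ioc 0 (1/2 : ℝ)) := by
    apply antitoneOn_of_hasDerivWithinAt_nonpos (convex_Ioc _ _)
      (f' := fun t => -(mglE t) / (2*t*(1-t)))
    · intro x hx
      exact ((hasDerivAt_mglF hx.1 (by linarith [hx.2])).continuousAt).continuousWithinAt
    · intro x hx
      rw [interior_Ioc] at hx
      exact (hasDerivAt_mglF hx.1 (by linarith [hx.2])).hasDerivWithinAt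
    · intro x hx
      rw [interior_Ioc] at hx
      have hE : 0 ≤ mglE x := mglE_nonneg hx.1 (le_of_lt hx.2)
      apply div_nonpos_of_nonpos_of_nonneg (by linarith)
      have : 0 < x*(1-x) := mul_pos hx.1 (by linarith [hx.2])
      nlinarith
  have := hanti ⟨h0, h1⟩ ⟨by norm_num, le_refl _⟩ h1
  rw [mglF_half] at this
  exact this

noncomputable def mglW (t : ℝ) : ℝ := t*(1-t)*(mglL t)^3

lemma mglW_pos {t : ℝ} (h0 : 0 < t) (h1 : t < 1/2) : 0 < mglW t := by
  have := mglL_pos h0 h1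
  have : 0 < (mglL t)^3 := by positivity
  have h2 : 0 < t*(1-t) := mul_pos h0 (by linarith)
  rw [mglW]; nlinarith

noncomputable def mglPsi (t : ℝ) : ℝ := (mglK t)^2 / mglW t

lemma hasDerivAt_mglW {t : ℝ} (h0 : 0 < t) (h1 : t < 1) :
    HasDerivAt mglW ((1-2*t)*(mglL t)^3
      + t*(1-t)*(3*(mglL t)^2*(-(1/(1-t)) - 1/t))) t := by
  have h0' : t ≠ 0 := ne_of_gt h0
  have h1' : t ≠ 1 := ne_of_lt h1
  have hL := hasDerivAt_mglL h0' h1'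
  have hid : HasDerivAt (fun x : ℝ => x) 1 t := hasDerivAt_id t
  have h1t : HasDerivAt (fun x : ℝ => 1 - x) (-1) t := hid.const_sub 1
  have h := (hid.mul h1t).mul (hL.pow 3)
  have hfun : mglW = fun x => x*(1-x)*(mglL x)^3 := rfl
  rw [hfun]
  refine h.congr_deriv ?_
  simp only [Pi.mul_apply, Pi.pow_apply]
  ring

lemma mglPsi_antitoneOn : AntitoneOn mglPsi (Ioo 0 (1/2 : ℝ)) := by
  have key : ∀ x ∈ Ioo (0:ℝ) (1/2),
      HasDerivAt mglPsi (-(mglK x)*(mglL x)^2*(mglF x) / (mglW x)^2) x := by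
    intro x hx
    have h0 : 0 < x := hx.1
    have h12 : x < 1/2 := hx.2
    have h1 : x < 1 := by linarith
    have h0' : x ≠ 0 := ne_of_gt h0
    have h1' : x ≠ 1 := ne_of_lt h1
    have hWpos := mglW_pos h0 h12
    have hW := hasDerivAt_mglW h0 h1
    have hK := hasDerivAt_mglK h0' h1'
    have hN := hK.pow 2
    have h := hN.div hW (ne_of_gt hWpos)
    refine h.congr_deriv ?_
    simp only [Pi.mul_apply, Pi.pow_apply]
    rw [mglF, mglW]
    have hx1 : (1:ℝ) - x ≠ 0 := sub_ne_zero.2 (Ne.symm h1')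
    rw [div_eq_div_iff (by positivity) (by positivity)]
    field_simp
    ring
  apply antitoneOn_of_hasDerivWithinAt_nonpos (convex_Ioo _ _)
    (f' := fun x => -(mglK x)*(mglL x)^2*(mglF x) / (mglW x)^2)
  · intro x hx
    exact ((key x hx).continuousAt).continuousWithinAt
  · intro x hx
    rw [interior_Ioo] at hx
    exact (key x hx).hasDerivWithinAt
  · intro x hx
    rw [interior_Ioo] at hx
    have hK0 : 0 ≤ mglK x := mglK_nonneg x
    have hL0 : 0 < mglL x := mglL_pos hx.1 hx.2
    have hF : 0 ≤ mglF x := mglF_nonneg hx.1 (le_of_lt hx.2)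
    apply div_nonpos_of_nonpos_of_nonneg _ (sq_nonneg _)
    have : 0 ≤ mglK x * (mglL x)^2 * mglF x := by positivity
    linarith

lemma mgl_key_ineq {u v : ℝ} (hu0 : 0 < u) (huv : u ≤ v) (hv : v < 1/2) :
    (mglK v)^2 * mglW u ≤ (mglK u)^2 * mglW v := by
  have hu2 : u < 1/2 := lt_of_le_of_lt huv hv
  have hWu := mglW_pos hu0 hu2
  have hWv := mglW_pos (lt_of_lt_of_le hu0 huv) hv
  have := mglPsi_antitoneOn ⟨hu0, hu2⟩ ⟨lt_of_lt_of_le hu0 huv, hv⟩ huv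
  rw [mglPsi, mglPsi, div_le_div_iff₀ hWv hWu] at this
  linarith

lemma binH_eq (p : ℝ) : binH p = Real.binEntropy p / Real.log 2 := by
  rw [binH, Real.binEntropy, Real.log_inv, Real.log_inv, Real.logb, Real.logb]
  ring

lemma binH_zero : binH 0 = 0 := by norm_num [binH]

lemma binH_half : binH (1/2) = 1 := by
  rw [binH_eq]
  have : Real.binEntropy (1/2) = Real.log 2 := by
    rw [one_div, Real.binEntropy_eq_log_two]
  rw [this, div_self (ne_of_gt (Real.log_pos one_lt_two))]

lemma binH_mem {p : ℝ} (hp : p ∈ Icc (0:ℝ) (1/2)) : binH p ∈ Icc (0:ℝ) 1 := by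
  have hlog2 : 0 < Real.log 2 := Real.log_pos one_lt_two
  rw [binH_eq]
  constructor
  · exact div_nonneg (Real.binEntropy_nonneg hp.1 (by linarith [hp.2])) hlog2.le
  · rw [div_le_one hlog2]
    exact Real.binEntropy_le_log_two

lemma binH_strictMonoOn : StrictMonoOn binH (Icc (0:ℝ) (1/2)) := by
  have hlog2 : 0 < Real.log 2 := Real.log_pos one_lt_two
  intro x hx y hy hxy
  rw [binH_eq, binH_eq]
  have : (1/2 : ℝ) = 2⁻¹ := by norm_num
  rw [this] at hx hy
  have := Real.binEntropy_strictMonoOn hx hy hxy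
  gcongr

lemma hasDerivAt_binH {t : ℝ} (h0 : t ≠ 0) (h1 : t ≠ 1) :
    HasDerivAt binH (mglL t / Real.log 2) t := by
  have h := (Real.hasDerivAt_binEntropy h0 h1).div_const (Real.log 2)
  have hfun : binH = fun p => Real.binEntropy p / Real.log 2 := funext binH_eq
  rw [hfun]
  exact h

theorem stmt6 (g : ℝ → ℝ)
    (hg_left : ∀ p ∈ Set.Icc (0:ℝ) (1/2), g (binH p) = p)
    (hg_right : ∀ x ∈ Set.Icc (0:ℝ) 1, binH (g x) = x ∧ g x ∈ Set.Icc (0:ℝ) (1/2))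
    (a : ℝ) (ha : a ∈ Set.Ioc (0:ℝ) 1) :
    ConcaveOn ℝ (Set.Icc 0 1) (fun x => g (a * x + 1 - a) - g x) := by
  obtain ⟨ha0, ha1⟩ := ha
  have hlog2 : 0 < Real.log 2 := Real.log_pos one_lt_two
  -- g is monotone on [0,1]
  have hmono : MonotoneOn g (Icc (0:ℝ) 1) := by
    intro x hx y hy hxy
    by_contra hgt
    push_neg at hgt
    have hx' := hg_right x hx
    have hy' := hg_right y hy
    have := binH_strictMonoOn hy'.2 hx'.2 hgt
    rw [hx'.1, hy'.1] at this
    exact absurd hxy (not_le.2 this)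
  -- values at endpoints
  have hg0 : g 0 = 0 := by
    have := hg_left 0 ⟨le_refl _, by norm_num⟩
    rwa [binH_zero] at this
  have hg1 : g 1 = 1/2 := by
    have := hg_left (1/2) ⟨by norm_num, le_refl _⟩
    rwa [binH_half] at this
  -- image of [0,1] is [0,1/2]
  have himage : g '' Icc (0:ℝ) 1 = Icc (0:ℝ) (1/2) := by
    apply Subset.antisymm
    · rintro _ ⟨x, hx, rfl⟩
      exact (hg_right x hx).2
    · intro p hp
      exact ⟨binH p, binH_mem hp, hg_left p hp⟩
  -- interior values
  have hint : ∀ x ∈ Ioo (0:ℝ) 1, g x ∈ Ioo (0:ℝ) (1/2) := by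
    intro x hx
    have hmem := (hg_right x (Ioo_subset_Icc_self hx)).2
    have hbin := (hg_right x (Ioo_subset_Icc_self hx)).1
    constructor
    · rcases eq_or_lt_of_le hmem.1 with h | h
      · exfalso; rw [← h, binH_zero] at hbin; linarith [hx.1]
      · exact h
    · rcases eq_or_lt_of_le hmem.2 with h | h
      · exfalso; rw [h, binH_half] at hbin; linarith [hx.2]
      · exact h
  -- continuity at interior points
  have hcontAt : ∀ x ∈ Ioo (0:ℝ) 1, ContinuousAt g x := by
    intro x hx
    apply continuousAt_of_monotoneOn_of_image_mem_nhds hmono (Icc_mem_nhds hx.1 hx.2)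
    rw [himage]
    exact Icc_mem_nhds (hint x hx).1 (hint x hx).2
  -- continuity on [0,1]
  have hcont : ContinuousOn g (Icc (0:ℝ) 1) := by
    intro x hx
    rcases eq_or_lt_of_le hx.1 with h0 | h0
    · subst h0
      have h : ContinuousWithinAt g (Ici (0:ℝ)) 0 :=
        continuousWithinAt_right_of_monotoneOn_of_image_mem_nhdsWithin hmono
          (Icc_mem_nhdsGE_of_mem ⟨le_refl _, by norm_num⟩)
          (by rw [himage, hg0]; exact Icc_mem_nhdsGE_of_mem ⟨le_refl _, by norm_num⟩)
      exact (h.mono Icc_subset_Ici_self)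
    rcases eq_or_lt_of_le hx.2 with h1 | h1
    · subst h1
      have h : ContinuousWithinAt g (Iic (1:ℝ)) 1 :=
        continuousWithinAt_left_of_monotoneOn_of_image_mem_nhdsWithin hmono
          (Icc_mem_nhdsLE_of_mem ⟨by norm_num, le_refl _⟩)
          (by rw [himage, hg1]; exact Icc_mem_nhdsLE_of_mem ⟨by norm_num, le_refl _⟩)
      exact (h.mono Icc_subset_Iic_self)
    · exact (hcontAt x ⟨h0, h1⟩).continuousWithinAt
  -- derivative of g at interior points
  have hgderiv : ∀ x ∈ Ioo (0:ℝ) 1, HasDerivAt g (Real.log 2 / mglL (g x)) x := by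
    intro x hx
    have hu := hint x hx
    have hL := mglL_pos hu.1 hu.2
    have hBd : HasDerivAt binH (mglL (g x) / Real.log 2) (g x) :=
      hasDerivAt_binH (ne_of_gt hu.1) (by intro h; rw [h] at hu; linarith [hu.2])
    have hev : ∀ᶠ y in nhds x, binH (g y) = y := by
      filter_upwards [Ioo_mem_nhds hx.1 hx.2] with y hy
      exact (hg_right y (Ioo_subset_Icc_self hy)).1
    have hinv := HasDerivAt.of_local_left_inverse (hcontAt x hx) hBd
      (div_ne_zero (ne_of_gt hL) (ne_of_gt hlog2)) hev
    simpa [inv_div] using hinv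
  -- the affine map stays in (0,1)
  have hlx : ∀ x ∈ Ioo (0:ℝ) 1, (a*x + 1 - a) ∈ Ioo (0:ℝ) 1 := by
    intro x hx
    constructor
    · nlinarith [hx.1, hx.2]
    · nlinarith [hx.1, hx.2]
  have hxle : ∀ x ∈ Ioo (0:ℝ) 1, x ≤ a*x + 1 - a := by
    intro x hx
    nlinarith [hx.1, hx.2]
  -- first derivative
  have haff : ∀ x : ℝ, HasDerivAt (fun y : ℝ => a*y + 1 - a) a x := by
    intro x
    simpa using (((hasDerivAt_id x).const_mul a).add_const (1:ℝ)).sub_const a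
  have hp' : ∀ x ∈ Ioo (0:ℝ) 1, HasDerivAt (fun y => g (a * y + 1 - a) - g y)
      ((Real.log 2 / mglL (g (a*x + 1 - a))) * a - Real.log 2 / mglL (g x)) x := by
    intro x hx
    exact ((hgderiv _ (hlx x hx)).comp x (haff x)).sub (hgderiv x hx)
  -- second derivative
  have hp'' : ∀ x ∈ Ioo (0:ℝ) 1,
      HasDerivAt (fun y => (Real.log 2 / mglL (g (a*y + 1 - a))) * a - Real.log 2 / mglL (g y))
        (a^2 * (Real.log 2)^2 / mglW (g (a*x + 1 - a)) - (Real.log 2)^2 / mglW (g x)) x := by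
    intro x hx
    have hu := hint x hx
    have hv := hint _ (hlx x hx)
    have hLu := mglL_pos hu.1 hu.2
    have hLv := mglL_pos hv.1 hv.2
    have hu0 : g x ≠ 0 := ne_of_gt hu.1
    have hu1 : g x ≠ 1 := by intro h; rw [h] at hu; norm_num at hu
    have hv0 : g (a*x+1-a) ≠ 0 := ne_of_gt hv.1
    have hv1 : g (a*x+1-a) ≠ 1 := by intro h; rw [h] at hv; norm_num at hv
    have hLcu : HasDerivAt (fun y => mglL (g y))
        ((-(1/(1 - g x)) - 1/(g x)) * (Real.log 2 / mglL (g x))) x :=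
      (hasDerivAt_mglL hu0 hu1).comp x (hgderiv x hx)
    have hdu := (hasDerivAt_const x (Real.log 2)).div hLcu (ne_of_gt hLu)
    have hgv : HasDerivAt (fun y => g (a*y + 1 - a))
        ((Real.log 2 / mglL (g (a*x+1-a))) * a) x :=
      (hgderiv _ (hlx x hx)).comp x (haff x)
    have hLcv : HasDerivAt (fun y => mglL (g (a*y+1-a)))
        ((-(1/(1 - g (a*x+1-a))) - 1/(g (a*x+1-a))) * ((Real.log 2 / mglL (g (a*x+1-a))) * a)) x :=
      by have := (hasDerivAt_mglL hv0 hv1).comp x hgv; exact this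
    have hdv := (hasDerivAt_const x (Real.log 2)).div hLcv (ne_of_gt hLv)
    have h := (hdv.mul_const a).sub hdu
    refine h.congr_deriv ?_
    have h1u : (1:ℝ) - g x ≠ 0 := sub_ne_zero.2 (Ne.symm hu1)
    have h1v : (1:ℝ) - g (a*x+1-a) ≠ 0 := sub_ne_zero.2 (Ne.symm hv1)
    rw [mglW, mglW]
    field_simp
    ring
  -- nonpositivity of the second derivative
  have hnonpos : ∀ x ∈ Ioo (0:ℝ) 1,
      a^2 * (Real.log 2)^2 / mglW (g (a*x + 1 - a)) - (Real.log 2)^2 / mglW (g x) ≤ 0 := by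
    intro x hx
    have hu := hint x hx
    have hv := hint _ (hlx x hx)
    have hWu := mglW_pos hu.1 hu.2
    have hWv := mglW_pos hv.1 hv.2
    have hguv : g x ≤ g (a*x+1-a) :=
      hmono (Ioo_subset_Icc_self hx) (Ioo_subset_Icc_self (hlx x hx)) (hxle x hx)
    have hkey := mgl_key_ineq hu.1 hguv hv.2
    have hbHu := (hg_right x (Ioo_subset_Icc_self hx)).1
    have hbHv := (hg_right _ (Ioo_subset_Icc_self (hlx x hx))).1
    rw [binH_eq] at hbHu hbHv
    have hbu : Real.binEntropy (g x) = x * Real.log 2 :=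
      (div_eq_iff (ne_of_gt hlog2)).1 hbHu
    have hbv : Real.binEntropy (g (a*x+1-a)) = (a*x+1-a) * Real.log 2 :=
      (div_eq_iff (ne_of_gt hlog2)).1 hbHv
    have hKu : mglK (g x) = (1 - x) * Real.log 2 := by rw [mglK_eq, hbu]; ring
    have hKv : mglK (g (a*x+1-a)) = a * ((1-x) * Real.log 2) := by
      rw [mglK_eq, hbv]; ring
    rw [hKv, hKu] at hkey
    have h2 : 0 < ((1-x) * Real.log 2)^2 := by
      have hx2 : (0:ℝ) < 1 - x := by linarith [hx.2]
      positivity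
    have haw : a^2 * mglW (g x) ≤ mglW (g (a*x+1-a)) := by nlinarith [hkey]
    rw [sub_nonpos, div_le_div_iff₀ hWv hWu]
    nlinarith [haw, sq_nonneg (Real.log 2)]
  -- assemble
  have hmaps : MapsTo (fun x : ℝ => a*x + 1 - a) (Icc (0:ℝ) 1) (Icc (0:ℝ) 1) := by
    intro x hx
    simp only [mem_Icc] at hx ⊢
    constructor
    · nlinarith [hx.1, hx.2]
    · nlinarith [hx.1, hx.2]
  apply concaveOn_of_hasDerivWithinAt2_nonpos (convex_Icc 0 1)
    (f' := fun x => (Real.log 2 / mglL (g (a*x + 1 - a))) * a - Real.log 2 / mglL (g x))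
    (f'' := fun x => a^2 * (Real.log 2)^2 / mglW (g (a*x + 1 - a)) - (Real.log 2)^2 / mglW (g x))
  · exact (hcont.comp (Continuous.continuousOn (by fun_prop) : ContinuousOn (fun x : ℝ => a*x + 1 - a) (Icc 0 1)) hmaps).sub hcont
  · intro x hx
    rw [interior_Icc] at hx
    exact (hp' x hx).hasDerivWithinAt
  · intro x hx
    rw [interior_Icc] at hx
    exact (hp'' x hx).hasDerivWithinAt
  · intro x hx
    rw [interior_Icc] at hx
    exact hnonpos x hx
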